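/- arXiv:2211.13631 — 5 statements merged into one kernel-verified Lean document; each statement's English description precedes it below -/
import Mathlib

section
/- Let G be a finite group such that every element g ∈ G is conjugate to its square g². Then G is the trivial group. -/
/-- If every element of a finite group is conjugate to its square, the group is trivial. -/
theorem every_elt_conj_to_square_implies_trivial
    (G : Type*) [Group G] [Finite G]
    (h : ∀ g : G, IsConj g (g ^ 2)) :
    ∀ g : G, g = 1 := by
  by_contra hne
  push_neg at hne
  obtain ⟨g0, hg0⟩ := hne
  have := Fintype.ofFinite G
  set n := Fintype.card G with hn
  have hn1 : 1 < n := Fintype.one_lt_card_iff_nontrivial.mpr ⟨g0, 1, hg0⟩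
  -- no element of order 2: an order-2 element is conjugate to its square = 1, hence is 1
  have hodd : ¬ (2 ∣ n) := by
    intro h2
    haveI : Fact (Nat.Prime 2) := ⟨Nat.prime_two⟩
    obtain ⟨t, ht⟩ := exists_prime_orderOf_dvd_card 2 h2
    have ht2 : t ^ 2 = 1 := by rw [← ht]; exact pow_orderOf_eq_one t
    obtain ⟨c, hc⟩ := (isConj_iff).mp (h t)
    rw [ht2] at hc
    have : t = 1 := by
      calc t = c⁻¹ * (c * t * c⁻¹) * c := by group
        _ = 1 := by rw [hc]; group
    rw [this, orderOf_one] at ht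
    omega
  set p := n.minFac with hp
  have hpp : p.Prime := Nat.minFac_prime (by omega)
  haveI : Fact p.Prime := ⟨hpp⟩
  have hpodd : p ≠ 2 := by
    intro he; exact hodd (he ▸ Nat.minFac_dvd n)
  have hp2 : 2 < p := lt_of_le_of_ne hpp.two_le (Ne.symm hpodd)
  obtain ⟨g, hg⟩ := exists_prime_orderOf_dvd_card p (Nat.minFac_dvd n)
  obtain ⟨x, hx⟩ := (isConj_iff).mp (h g)
  -- x^k g x^{-k} = g^(2^k)
  have key : ∀ k : ℕ, x ^ k * g * (x ^ k)⁻¹ = g ^ (2 ^ k) := by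
    intro k
    induction k with
    | zero => simp
    | succ k ih =>
      have : x ^ (k+1) * g * (x ^ (k+1))⁻¹ = x * (x ^ k * g * (x ^ k)⁻¹) * x⁻¹ := by
        group
      rw [this, ih, ← conj_pow, hx, ← pow_mul]
      ring_nf
  set m := orderOf x with hm
  have hxm : x ^ m = 1 := pow_orderOf_eq_one x
  have hgm : g ^ (2 ^ m) = g := by
    have := key m
    rw [hxm] at this
    simpa using this.symm
  -- so p ∣ 2^m - 1
  have hdvd : p ∣ 2 ^ m - 1 := by
    have h1 : g ^ (2 ^ m - 1) = 1 := by
      have h2 : (2:ℕ) ^ m - 1 + 1 = 2 ^ m := Nat.succ_pred_eq_of_pos (pow_pos (by norm_num) m)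
      have : g ^ (2 ^ m - 1) * g = g := by
        rw [← pow_succ, h2, hgm]
      exact mul_right_cancel (by rw [this, one_mul])
    rw [← hg]
    exact orderOf_dvd_of_pow_eq_one h1
  -- in ZMod p, 2^m = 1
  have hzm : (2 : ZMod p) ^ m = 1 := by
    have hcast : ((2 ^ m - 1 : ℕ) : ZMod p) = 0 := (ZMod.natCast_eq_zero_iff _ _).mpr hdvd
    have h2 : (2:ℕ) ^ m - 1 + 1 = 2 ^ m := Nat.succ_pred_eq_of_pos (pow_pos (by norm_num) m)
    have : ((2 ^ m : ℕ) : ZMod p) = 1 := by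
      rw [← h2]; push_cast [hcast]; simp [hcast]
    push_cast at this
    exact this
  set d := orderOf (2 : ZMod p) with hd
  have hdm : d ∣ m := orderOf_dvd_of_pow_eq_one hzm
  have h2ne : (2 : ZMod p) ≠ 0 := by
    intro he
    have : (p : ℕ) ∣ 2 := by
      have := (ZMod.natCast_eq_zero_iff 2 p).mp (by exact_mod_cast he)
      exact this
    have := Nat.le_of_dvd (by norm_num) this
    omega
  have hdp : d ∣ p - 1 := orderOf_dvd_of_pow_eq_one (ZMod.pow_card_sub_one_eq_one h2ne)
  have hd1 : d ≠ 1 := by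
    intro he
    have : (2 : ZMod p) = 1 := orderOf_eq_one_iff.mp he
    have h21 : ((2:ℕ) : ZMod p) = ((1:ℕ) : ZMod p) := by push_cast; exact_mod_cast this
    have := (ZMod.natCast_eq_natCast_iff' 2 1 p).mp h21
    simp [Nat.mod_eq_of_lt hp2, Nat.mod_eq_of_lt (by omega : 1 < p)] at this
  have hd0 : d ≠ 0 := by
    intro he
    rw [he] at hdp
    have : p - 1 = 0 := Nat.eq_zero_of_zero_dvd hdp
    omega
  set q := d.minFac with hq
  have hqp : q.Prime := Nat.minFac_prime hd1
  have hqn : q ∣ n := (hq ▸ (Nat.minFac_dvd d)).trans (hdm.trans (hm ▸ orderOf_dvd_card))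
  have hpq : p ≤ q := Nat.minFac_le_of_dvd hqp.two_le hqn
  have hqd : q ≤ d := Nat.minFac_le (Nat.pos_of_ne_zero hd0)
  have : d ≤ p - 1 := Nat.le_of_dvd (by omega) hdp
  omega
end

section
/- Let p ≥ 5 be a prime and let H be a subgroup of the multiplicative group (ℤ/pℤ)×/{±1} which, identified with a set of odd residues, equals {1, 3, 5, …, j} (classes of all odd numbers from 1 to j) for some odd j with 3 ≤ j ≤ p-2. Then H is the whole group, i.e., j = p-2. -/
private lemma dvd_eq_of_bounds {p d : ℕ} (hd : p ∣ d) (h1 : 0 < d) (h2 : d < 2 * p) :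
    d = p := by
  obtain ⟨m, rfl⟩ := hd
  have hm0 : m ≠ 0 := by rintro rfl; simp at h1
  have hm2 : m < 2 := by
    by_contra h
    push_neg at h
    have := lt_of_le_of_lt (Nat.mul_le_mul_left p h) h2
    omega
  have : m = 1 := by omega
  simp [this]

/-- If a subgroup of `(ℤ/pℤ)ˣ/{±1}` consists exactly of the classes of the odd
numbers `1, 3, …, j` for some odd `3 ≤ j ≤ p-2`, then `j = p - 2`. -/
theorem subgroup_of_odd_residues (p : ℕ) (hp : p.Prime) (hp5 : 5 ≤ p)
    (j : ℕ) (hjodd : Odd j) (hj3 : 3 ≤ j) (hjp : j ≤ p - 2)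
    (H : Subgroup ((ZMod p)ˣ ⧸ Subgroup.zpowers (-1 : (ZMod p)ˣ)))
    (hH : ∀ x, x ∈ H ↔ ∃ t : ℕ, Odd t ∧ 1 ≤ t ∧ t ≤ j ∧
      ∃ u : (ZMod p)ˣ, ((u : ZMod p) = (t : ZMod p)) ∧ x = QuotientGroup.mk u) :
    j = p - 2 := by
  haveI : Fact p.Prime := ⟨hp⟩
  have hpodd : Odd p := hp.odd_of_ne_two (by omega)
  have hne : ∀ t : ℕ, 0 < t → t < p → ((t : ZMod p) ≠ 0) := by
    intro t ht1 ht2 h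
    rw [ZMod.natCast_eq_zero_iff] at h
    have := Nat.le_of_dvd ht1 h
    omega
  -- sign dichotomy for zpowers of -1
  have hsign : ∀ k : ℤ, ((-1 : (ZMod p)ˣ)) ^ k = 1 ∨ ((-1 : (ZMod p)ˣ)) ^ k = -1 := by
    intro k
    rcases Int.even_or_odd k with he | ho
    · exact Or.inl (Even.neg_one_zpow he)
    · right
      obtain ⟨m, rfl⟩ := ho
      rw [zpow_add, zpow_one, zpow_mul,
        show ((-1 : (ZMod p)ˣ)) ^ (2 : ℤ) = 1 from by rw [zpow_two]; simp, one_zpow, one_mul]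
  -- key dichotomy: for odd t ≤ j, either 3t ≤ j or 3t ≥ 2p - j
  have key : ∀ t : ℕ, Odd t → 1 ≤ t → t ≤ j → 3 * t ≤ j ∨ 2 * p - j ≤ 3 * t := by
    intro t htodd ht1 htj
    by_contra hcon
    push_neg at hcon
    obtain ⟨h1, h2⟩ := hcon
    have htp : t < p := by omega
    have h3p : (3 : ℕ) < p := by omega
    set u3 : (ZMod p)ˣ := Units.mk0 ((3 : ℕ) : ZMod p) (hne 3 (by omega) h3p) with hu3
    set ut : (ZMod p)ˣ := Units.mk0 ((t : ℕ) : ZMod p) (hne t (by omega) htp) with hut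
    have hmem3 : (QuotientGroup.mk u3 : (ZMod p)ˣ ⧸ Subgroup.zpowers (-1 : (ZMod p)ˣ)) ∈ H :=
      (hH _).2 ⟨3, ⟨1, rfl⟩, by omega, by omega, u3, rfl, rfl⟩
    have hmemt : (QuotientGroup.mk ut : (ZMod p)ˣ ⧸ Subgroup.zpowers (-1 : (ZMod p)ˣ)) ∈ H :=
      (hH _).2 ⟨t, htodd, ht1, htj, ut, rfl, rfl⟩
    have hmem : (QuotientGroup.mk (u3 * ut) :
        (ZMod p)ˣ ⧸ Subgroup.zpowers (-1 : (ZMod p)ˣ)) ∈ H := by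
      rw [QuotientGroup.mk_mul]
      exact H.mul_mem hmem3 hmemt
    obtain ⟨t', ht'odd, ht'1, ht'j, u', hu', hmk⟩ := (hH _).1 hmem
    rw [QuotientGroup.eq] at hmk
    obtain ⟨k, hk⟩ := Subgroup.mem_zpowers_iff.mp hmk
    obtain ⟨a, ha⟩ := htodd
    obtain ⟨b, hb⟩ := ht'odd
    obtain ⟨c, hc⟩ := hpodd
    rcases hsign k with hs | hs
    · rw [hs] at hk
      have huu : u3 * ut = u' := inv_mul_eq_one.mp hk.symm
      have hval : (((3 * t : ℕ) : ZMod p)) = ((t' : ℕ) : ZMod p) := by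
        have := congrArg Units.val huu
        rw [Units.val_mul, hu3, hut, Units.val_mk0, Units.val_mk0, hu'] at this
        rw [Nat.cast_mul]
        exact this
      have hmod : (3 * t) ≡ t' [MOD p] := (ZMod.natCast_eq_natCast_iff _ _ _).mp hval
      have hdvd : p ∣ 3 * t - t' := (Nat.modEq_iff_dvd' (by omega)).mp hmod.symm
      have heq : 3 * t - t' = p := dvd_eq_of_bounds hdvd (by omega) (by omega)
      omega
    · rw [hs] at hk
      have huu : u' = -(u3 * ut) := by
        have : (u3 * ut) * (-1) = u' := by
          rw [hk]; group
        rw [← this]; simp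
      have hval : (((3 * t + t' : ℕ) : ZMod p)) = 0 := by
        have := congrArg Units.val huu
        rw [Units.val_neg, Units.val_mul, hu3, hut, Units.val_mk0, Units.val_mk0, hu'] at this
        push_cast
        rw [this]
        push_cast
        ring
      rw [ZMod.natCast_eq_zero_iff] at hval
      have heq : 3 * t + t' = p := dvd_eq_of_bounds hval (by omega) (by omega)
      omega
  -- conclude
  by_contra hne2
  have hjp3 : j < p - 3 := by
    obtain ⟨c, hc⟩ := hpodd
    obtain ⟨a, ha⟩ := hjodd
    omega
  have step : ∀ t, Odd t → 1 ≤ t → t ≤ j → 3 * t ≤ j := by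
    intro t
    induction t using Nat.strong_induction_on with
    | _ t ih =>
      intro htodd ht1 htj
      rcases eq_or_lt_of_le ht1 with h1 | h1
      · omega
      · obtain ⟨a, ha⟩ := htodd
        have ht3 : 3 ≤ t := by omega
        have hprev : 3 * (t - 2) ≤ j := ih (t - 2) (by omega) ⟨a - 1, by omega⟩ (by omega) (by omega)
        rcases key t ⟨a, ha⟩ ht1 htj with h | h
        · exact h
        · omega
  have := step j hjodd (by omega) le_rfl
  omega
end

section
/- Let R be a commutative ring free as a ℤ-module with basis 1, X, Y, Z and multiplication X² = pX + lY + cZ, Y² = 1 + kX + eY + kZ, Z² = cX + lY + pZ, XY = qX + kY + lZ, YZ = lX + kY + qZ, XZ = 1 + pX + qY + pZ, where c,e,k,l,p,q are non-negative integers satisfying kl + lc = lp + kq, kp + le + kc = 2lq + k², l² + c² = 1 + q² + p², and l² + k² + q² = 1 + 2pk + qe. Suppose k = e = 0 and q = 1. Then there are no such non-negative integers (the constraints are contradictory). -/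
/-- In the rank-4 based rings `K(c,e,k,l,p,q)`, the case `k = e = 0`, `q = 1` is
impossible: no non-negative integers satisfy the defining constraints. -/
theorem rank_four_no_solutions :
    ¬ ∃ c e k l p q : ℕ,
      k = 0 ∧ e = 0 ∧ q = 1 ∧
      k * l + l * c = l * p + k * q ∧
      k * p + l * e + k * c = 2 * l * q + k ^ 2 ∧
      l ^ 2 + c ^ 2 = 1 + q ^ 2 + p ^ 2 ∧
      l ^ 2 + k ^ 2 + q ^ 2 = 1 + 2 * p * k + q * e := by
  rintro ⟨c, e, k, l, p, q, rfl, rfl, rfl, h1, h2, h3, h4⟩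
  simp only [pow_two] at h3 h4
  have hl : l = 0 := by nlinarith
  subst hl
  simp at h3
  -- c * c = 2 + p * p
  have hcp : p < c := by nlinarith
  have hle : p + 1 ≤ c := hcp
  have hmul : (p + 1) * (p + 1) ≤ c * c := Nat.mul_le_mul hle hle
  have hp : p = 0 := by nlinarith
  subst hp
  have hc1 : c ≤ 1 := by nlinarith
  interval_cases c <;> omega
end

section
/- Let c,e,k,l,p,q be non-negative integers satisfying l² + c² = 1 + q² + p² and l² + k² + q² = 1 + 2pk + qe, with q = 0 and l = 0 and suppose the positive real Frobenius–Perron dimension d of X satisfies d² = 1 + 2pd and d = k. Then k = c = 1, p = 0, and furthermore if the positive integer b satisfies b² = eb + 3 then e = 2 and b = 3. -/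
/-- Arithmetic core of the rank-4 classification, Case 2. -/
theorem rank_four_case_two (c e k l p q : ℕ)
    (h3 : l ^ 2 + c ^ 2 = 1 + q ^ 2 + p ^ 2)
    (h4 : l ^ 2 + k ^ 2 + q ^ 2 = 1 + 2 * p * k + q * e)
    (hq : q = 0) (hl : l = 0)
    (d : ℝ) (hd : 0 < d) (hdeq : d ^ 2 = 1 + 2 * (p : ℝ) * d) (hdk : d = (k : ℝ)) :
    k = 1 ∧ c = 1 ∧ p = 0 ∧
      ∀ b : ℕ, 0 < b → b ^ 2 = e * b + 3 → e = 2 ∧ b = 3 := by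
  subst hq hl
  simp only [pow_two, Nat.zero_mul, Nat.mul_zero, Nat.zero_add, Nat.add_zero] at h3 h4
  -- c*c = 1 + p*p
  have hcp : p < c := by nlinarith
  have hp0 : p = 0 := by nlinarith [Nat.succ_le_of_lt hcp]
  subst hp0
  have hc1 : c = 1 := by nlinarith
  have hk1 : k = 1 := by nlinarith
  refine ⟨hk1, hc1, rfl, fun b hb hbe => ?_⟩
  have hdvd : b ∣ 3 := by
    have : b ∣ b ^ 2 := dvd_pow_self b (by norm_num)
    rw [hbe] at this
    exact (Nat.dvd_add_right ⟨e, by ring⟩).mp this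
  have hble := Nat.le_of_dvd (by norm_num) hdvd
  interval_cases b <;> omega
end

section
/- Let R be a commutative ring with ℤ-basis 1, X, Y where X² = 1 + mX + kY, Y² = 1 + lX + nY, XY = kX + lY for non-negative integers k,l,m,n with k² + l² = kn + lm + 1. Suppose ψ : R → R is a ring homomorphism with ψ(X) = ε₁·1 and ψ(Y) = ε₂·1 where ε₁, ε₂ ∈ {1, -1}. Then m = k, l = n, ε₁ε₂ = -1, and l = k + 1 or k = l + 1. -/
/-- The 'trivial image' case in the rank-3 classification. -/
theorem rank_three_trivial_image
    (R : Type*) [CommRing R] (X Y : R)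
    (B : Module.Basis (Fin 3) ℤ R) (hB0 : B 0 = 1) (hB1 : B 1 = X) (hB2 : B 2 = Y)
    (k l m n : ℕ) (hbased : k ^ 2 + l ^ 2 = k * n + l * m + 1)
    (hX2 : X * X = 1 + (m : ℤ) • X + (k : ℤ) • Y)
    (hY2 : Y * Y = 1 + (l : ℤ) • X + (n : ℤ) • Y)
    (hXY : X * Y = (k : ℤ) • X + (l : ℤ) • Y)
    (ψ : R →+* R) (ε₁ ε₂ : ℤ)
    (hε₁ : ε₁ = 1 ∨ ε₁ = -1) (hε₂ : ε₂ = 1 ∨ ε₂ = -1)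
    (hψX : ψ X = ε₁ • (1 : R)) (hψY : ψ Y = ε₂ • (1 : R)) :
    m = k ∧ l = n ∧ ε₁ * ε₂ = -1 ∧ (l = k + 1 ∨ k = l + 1) := by
  have key : ∀ a b : ℤ, ((a : ℤ) : R) = b → a = b := by
    intro a b h
    have h1 : B.repr ((a : ℤ) • (1 : R)) 0 = B.repr ((b : ℤ) • (1 : R)) 0 := by
      rw [zsmul_eq_mul, zsmul_eq_mul, mul_one, mul_one, h]
    rw [← hB0, map_smul, map_smul, Module.Basis.repr_self] at h1
    simpa using h1
  have hψ1 : ψ X = ((ε₁ : ℤ) : R) := by rw [hψX, zsmul_eq_mul, mul_one]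
  have hψ2 : ψ Y = ((ε₂ : ℤ) : R) := by rw [hψY, zsmul_eq_mul, mul_one]
  have e1 := congrArg ψ hX2
  have e2 := congrArg ψ hY2
  have e3 := congrArg ψ hXY
  simp only [map_mul, map_add, map_one, map_zsmul, map_intCast, hψ1, hψ2, zsmul_eq_mul] at e1 e2 e3
  push_cast at e1 e2 e3
  have E1 : ε₁ * ε₁ = 1 + (m : ℤ) * ε₁ + (k : ℤ) * ε₂ := key _ _ (by push_cast; linear_combination e1)
  have E2 : ε₂ * ε₂ = 1 + (l : ℤ) * ε₁ + (n : ℤ) * ε₂ := key _ _ (by push_cast; linear_combination e2)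
  have E3 : ε₁ * ε₂ = (k : ℤ) * ε₁ + (l : ℤ) * ε₂ := key _ _ (by push_cast; linear_combination e3)
  clear hbased; rcases hε₁ with rfl | rfl <;> rcases hε₂ with rfl | rfl <;>
    ring_nf at E1 E2 E3 ⊢ <;>
    first | omega | exact ⟨by omega, by omega, trivial, by omega⟩
end
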